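/- Fix an integer h ≥ 2 and reals μ > 2^{h−1} and 0 ≤ c ≤ 1. Then ∑_{s=1}^{⌊n/2⌋} C(n,s)² · n^{ −( (4 s (1 − s/n) / 2^{h−1}) · μ − c ) } → 0 as n → ∞. -/

import Mathlib

open Filter Finset Real

private lemma key_exp (ε c η n s : ℝ) (hε : 1 < ε) (hc0 : 0 ≤ c) (hc1 : c ≤ 1)
    (hη0 : 0 < η) (hηε : 2 * η ≤ ε - 1) (hη1 : 2 * η ≤ 1)
    (hn : 4 ≤ (ε - 1) * n) (hs1 : 1 ≤ s) (hs2 : 2 * s ≤ n) :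
    2 * s + c - 4 * s * (1 - s / n) * ε ≤ -(η * s) := by
  have hn0 : 0 < n := by nlinarith
  have hns : 4 * s * (1 - s / n) * ε = (4 * s * (n - s) * ε) / n := by
    field_simp
  rw [hns]
  have H : (2 * s + c + η * s) * n ≤ 4 * s * (n - s) * ε := by
    rcases le_or_gt (4 * s) n with h4 | h4
    · -- s ≤ n/4 : n - s ≥ 3n/4
      nlinarith [mul_nonneg (mul_nonneg (by linarith : (0:ℝ) ≤ s) hn0.le)
          (by linarith : (0:ℝ) ≤ 3 * ε - 3 - η),
        mul_nonneg (mul_nonneg (by linarith : (0:ℝ) ≤ s) (by linarith : (0:ℝ) ≤ n - 4 * s))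
          (by linarith : (0:ℝ) ≤ ε),
        mul_nonneg hn0.le (by linarith : (0:ℝ) ≤ s - c)]
    · -- n/4 < s ≤ n/2 : n - s ≥ n/2, s > n/4
      nlinarith [mul_nonneg (mul_nonneg (by linarith : (0:ℝ) ≤ 2 * s) (by linarith : (0:ℝ) ≤ ε))
          (by linarith : (0:ℝ) ≤ n - 2 * s),
        mul_nonneg (mul_nonneg (by linarith : (0:ℝ) ≤ s) hn0.le)
          (by linarith : (0:ℝ) ≤ ε - 1 - η),
        mul_le_mul_of_nonneg_right hn hn0.le,
        mul_nonneg (mul_nonneg hn0.le (by linarith : (0:ℝ) ≤ ε - 1))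
          (by linarith : (0:ℝ) ≤ 4 * s - n),
        mul_nonneg hn0.le (by linarith : (0:ℝ) ≤ 1 - c)]
  have H2 : 2 * s + c + η * s ≤ 4 * s * (n - s) * ε / n := by
    rw [le_div_iff₀ hn0]; exact H
  linarith

private lemma geom_bound (x : ℝ) (hx0 : 0 ≤ x) (hx : x ≤ 1 / 2) (m : ℕ) :
    ∑ s ∈ Finset.Icc 1 m, x ^ s ≤ 2 * x := by
  have h1 : ∑ s ∈ Finset.Icc 1 m, x ^ s = x * ∑ i ∈ Finset.range m, x ^ i := by
    rw [← Finset.Ico_add_one_right_eq_Icc, Finset.sum_Ico_eq_sum_range]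
    simp only [Nat.succ_sub_one, Nat.add_sub_cancel, pow_add, pow_one, ← Finset.mul_sum]
  rw [h1]
  have h2 : ∑ i ∈ Finset.range m, x ^ i ≤ 2 := by
    calc ∑ i ∈ Finset.range m, x ^ i ≤ ∑ i ∈ Finset.range m, (1 / (2:ℝ)) ^ i :=
          Finset.sum_le_sum fun i _ => pow_le_pow_left₀ hx0 hx i
      _ ≤ 2 := sum_geometric_two_le m
  calc x * ∑ i ∈ Finset.range m, x ^ i ≤ x * 2 := by
        exact mul_le_mul_of_nonneg_left h2 hx0
    _ = 2 * x := by ring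

/-- For `h ≥ 2`, `μ > 2^{h−1}` and `0 ≤ c ≤ 1`, the union-bound sum
`∑_{s=1}^{⌊n/2⌋} C(n,s)² n^{−((4s(1−s/n)/2^{h−1}) μ − c)}` tends to `0` as `n → ∞`. -/
theorem stmt7 (h : ℕ) (hh : 2 ≤ h) (μ c : ℝ) (hμ : (2 : ℝ) ^ (h - 1) < μ)
    (hc0 : 0 ≤ c) (hc1 : c ≤ 1) :
    Filter.Tendsto
      (fun n : ℕ => ∑ s ∈ Finset.Icc 1 (n / 2),
        ((n.choose s : ℝ)) ^ 2 *
          (n : ℝ) ^ (-((4 * (s : ℝ) * (1 - (s : ℝ) / (n : ℝ)) / 2 ^ (h - 1)) * μ - c)))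
      Filter.atTop (nhds 0) := by
  set ε : ℝ := μ / 2 ^ (h - 1) with hεdef
  have hpow : (0:ℝ) < 2 ^ (h - 1) := by positivity
  have hε : 1 < ε := (one_lt_div hpow).2 hμ
  set η : ℝ := min (ε - 1) 1 / 2 with hηdef
  have hη0 : 0 < η := by
    have : 0 < min (ε - 1) 1 := lt_min (by linarith) one_pos
    positivity
  have hηε : 2 * η ≤ ε - 1 := by
    have := min_le_left (ε - 1) 1; rw [hηdef]; linarith
  have hη1 : 2 * η ≤ 1 := by
    have := min_le_right (ε - 1) 1; rw [hηdef]; linarith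
  have htail : Tendsto (fun n : ℕ => 2 * (n : ℝ) ^ (-η)) atTop (nhds 0) := by
    have h1 : Tendsto (fun n : ℕ => (n : ℝ) ^ (-η)) atTop (nhds 0) :=
      (tendsto_rpow_neg_atTop hη0).comp tendsto_natCast_atTop_atTop
    simpa using h1.const_mul 2
  apply squeeze_zero'
  · filter_upwards with n
    exact Finset.sum_nonneg fun s _ => by positivity
  · have E1 : ∀ᶠ n : ℕ in atTop, (1:ℝ) ≤ (n : ℝ) := by
      filter_upwards [eventually_ge_atTop 1] with n hn
      exact_mod_cast hn
    have E2 : ∀ᶠ n : ℕ in atTop, (4:ℝ) ≤ (ε - 1) * (n : ℝ) := by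
      have : Tendsto (fun n : ℕ => (ε - 1) * (n : ℝ)) atTop atTop :=
        (tendsto_natCast_atTop_atTop (R := ℝ)).const_mul_atTop (by linarith)
      exact this.eventually_ge_atTop 4
    have E3 : ∀ᶠ n : ℕ in atTop, (n : ℝ) ^ (-η) ≤ 1 / 2 := by
      have h1 : Tendsto (fun n : ℕ => (n : ℝ) ^ (-η)) atTop (nhds 0) :=
        (tendsto_rpow_neg_atTop hη0).comp tendsto_natCast_atTop_atTop
      filter_upwards [h1.eventually (ge_mem_nhds (by norm_num : (0:ℝ) < 1/2))] with n hn
      exact hn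
    filter_upwards [E1, E2, E3] with n hn1 hn2 hn3
    have hn0 : (0:ℝ) < (n : ℝ) := by linarith
    calc (∑ s ∈ Finset.Icc 1 (n / 2),
          ((n.choose s : ℝ)) ^ 2 *
            (n : ℝ) ^ (-((4 * (s : ℝ) * (1 - (s : ℝ) / (n : ℝ)) / 2 ^ (h - 1)) * μ - c)))
        ≤ ∑ s ∈ Finset.Icc 1 (n / 2), ((n : ℝ) ^ (-η)) ^ s := by
          apply Finset.sum_le_sum
          intro s hs
          rw [Finset.mem_Icc] at hs
          have hs1 : (1:ℝ) ≤ (s:ℝ) := by exact_mod_cast hs.1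
          have hs2 : 2 * (s:ℝ) ≤ (n:ℝ) := by
            have h2s : 2 * s ≤ n := by omega
            exact_mod_cast h2s
          have hchoose : ((n.choose s : ℝ)) ≤ (n : ℝ) ^ s := by
            exact_mod_cast Nat.cast_le.2 (Nat.choose_le_pow n s)
          have hch0 : (0:ℝ) ≤ (n.choose s : ℝ) := by positivity
          have hrp : (0:ℝ) ≤ (n : ℝ) ^ (-((4 * (s : ℝ) * (1 - (s : ℝ) / (n : ℝ)) / 2 ^ (h - 1)) * μ - c)) :=
            Real.rpow_nonneg hn0.le _
          calc ((n.choose s : ℝ)) ^ 2 *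
                (n : ℝ) ^ (-((4 * (s : ℝ) * (1 - (s : ℝ) / (n : ℝ)) / 2 ^ (h - 1)) * μ - c))
              ≤ ((n : ℝ) ^ s) ^ 2 *
                (n : ℝ) ^ (-((4 * (s : ℝ) * (1 - (s : ℝ) / (n : ℝ)) / 2 ^ (h - 1)) * μ - c)) := by
                apply mul_le_mul_of_nonneg_right _ hrp
                exact pow_le_pow_left₀ hch0 hchoose 2
            _ = (n : ℝ) ^ ((2 * s : ℕ) : ℝ) *
                (n : ℝ) ^ (-((4 * (s : ℝ) * (1 - (s : ℝ) / (n : ℝ)) / 2 ^ (h - 1)) * μ - c)) := by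
                rw [Real.rpow_natCast, ← pow_mul, mul_comm s 2]
            _ = (n : ℝ) ^ (((2 * s : ℕ) : ℝ) +
                (-((4 * (s : ℝ) * (1 - (s : ℝ) / (n : ℝ)) / 2 ^ (h - 1)) * μ - c))) := by
                rw [← Real.rpow_add hn0]
            _ ≤ (n : ℝ) ^ (-(η * (s : ℝ))) := by
                apply Real.rpow_le_rpow_of_exponent_le hn1
                have hkey := key_exp ε c η (n : ℝ) (s : ℝ) hε hc0 hc1 hη0 hηε hη1 hn2 hs1 hs2
                have heq : (4 * (s : ℝ) * (1 - (s : ℝ) / (n : ℝ)) / 2 ^ (h - 1)) * μ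
                    = 4 * (s : ℝ) * (1 - (s : ℝ) / (n : ℝ)) * ε := by
                  rw [hεdef]; ring
                push_cast
                rw [heq]
                linarith
            _ = ((n : ℝ) ^ (-η)) ^ s := by
                rw [← Real.rpow_natCast ((n : ℝ) ^ (-η)) s, ← Real.rpow_mul hn0.le]
                ring_nf
      _ ≤ 2 * (n : ℝ) ^ (-η) :=
          geom_bound _ (Real.rpow_nonneg hn0.le _) hn3 _
  · exact htail
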